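/- For every limit ordinal γ and every λ with 1 ≤ λ ≤ ω, there is a partition {A_k : k < λ} of γ into λ pieces such that each piece A_k, with the order inherited from γ, has order type γ. -/

import Mathlib

open Ordinal

noncomputable def rnat (α : Ordinal) : ℕ :=
  Classical.choose (Ordinal.lt_omega0.1 (Ordinal.mod_lt α Ordinal.omega0_ne_zero))

lemma rnat_spec (α : Ordinal) : α % Ordinal.omega0 = (rnat α : Ordinal) :=
  Classical.choose_spec (Ordinal.lt_omega0.1 (Ordinal.mod_lt α Ordinal.omega0_ne_zero))

lemma rnat_eq {α : Ordinal} {m : ℕ} (h : α % Ordinal.omega0 = (m : Ordinal)) : rnat α = m := by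
  have := (rnat_spec α).symm.trans h
  exact_mod_cast this

lemma rnat_mul_add (q : Ordinal) (m : ℕ) : rnat (Ordinal.omega0 * q + m) = m := by
  apply rnat_eq
  rw [Ordinal.mul_add_mod_self, Ordinal.mod_eq_of_lt (Ordinal.nat_lt_omega0 m)]

lemma div_mul_add (q : Ordinal) (m : ℕ) : (Ordinal.omega0 * q + m) / Ordinal.omega0 = q := by
  rw [Ordinal.mul_add_div _ Ordinal.omega0_ne_zero,
    Ordinal.div_eq_zero_of_lt (Ordinal.nat_lt_omega0 m), add_zero]

/-- For every limit ordinal γ and every λ with 1 ≤ λ ≤ ω (here: every nonempty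
countable index type ι), there is a partition {A_k : k ∈ ι} of γ (viewed as the linearly
ordered set of ordinals below γ) into pairwise disjoint pieces whose union is everything,
such that each piece, with the inherited order, has order type γ. -/
theorem stmt0 (γ : Ordinal) (hγ : Order.IsSuccLimit γ) (ι : Type) [Nonempty ι] [Countable ι] :
    ∃ A : ι → Set (Set.Iio γ),
      Pairwise (Function.onFun Disjoint A) ∧
      (⋃ k, A k) = Set.univ ∧
      ∀ k, Nonempty (↥(A k) ≃o ↥(Set.Iio γ)) := by
  obtain ⟨s, hs⟩ := exists_surjective_nat ι
  set g : ℕ → ι := fun n => s n.unpair.1 with hg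
  have hfib : ∀ k, {n | g n = k}.Infinite := by
    intro k
    obtain ⟨m, hm⟩ := hs k
    apply Set.infinite_of_injective_forall_mem (f := fun j : ℕ => Nat.pair m j)
    · intro a b h
      have := congrArg Nat.unpair h
      simpa using this
    · intro j
      simp [g, Nat.unpair_pair, hm]
  -- closure under adding naturals
  have hadd : ∀ (a : Ordinal), a < γ → ∀ n : ℕ, a + n < γ := by
    intro a ha n
    induction n with
    | zero => simpa
    | succ n ih =>
      have : ((n + 1 : ℕ) : Ordinal) = (n : Ordinal) + 1 := by push_cast; ring
      rw [this, ← add_assoc, Ordinal.add_one_eq_succ]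
      exact hγ.succ_lt ih
  have hqle : ∀ α : Set.Iio γ, Ordinal.omega0 * ((α : Ordinal) / Ordinal.omega0) < γ := by
    intro α
    have h1 : Ordinal.omega0 * ((α : Ordinal) / Ordinal.omega0) ≤ (α : Ordinal) := by
      conv_rhs => rw [← Ordinal.div_add_mod (α : Ordinal) Ordinal.omega0]
      exact le_self_add
    exact lt_of_le_of_lt h1 α.2
  refine ⟨fun k => {α | g (rnat α) = k}, ?_, ?_, ?_⟩
  · intro k k' hne
    rw [Function.onFun, Set.disjoint_left]
    rintro α (h1 : _ = k) (h2 : _ = k')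
    exact hne (h1 ▸ h2 ▸ rfl)
  · ext α
    simp only [Set.mem_iUnion, Set.mem_univ, iff_true]
    exact ⟨g (rnat α), rfl⟩
  · intro k
    set p : ℕ → Prop := fun n => g n = k with hp
    have hpinf : (setOf p).Infinite := hfib k
    set F : Set.Iio γ → Set.Iio γ := fun α =>
      ⟨Ordinal.omega0 * ((α : Ordinal) / Ordinal.omega0) + (Nat.nth p (rnat α) : Ordinal),
        hadd _ (hqle α) _⟩ with hF
    have hFmono : StrictMono F := by
      intro α β h
      have h' : (α : Ordinal) < (β : Ordinal) := h
      have hq : (α : Ordinal) / Ordinal.omega0 ≤ (β : Ordinal) / Ordinal.omega0 :=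
        Ordinal.div_le_left h'.le _
      rcases hq.lt_or_eq with hlt | heq
      · show (F α : Ordinal) < (F β : Ordinal)
        calc (F α : Ordinal)
            < Ordinal.omega0 * ((α : Ordinal) / Ordinal.omega0) + Ordinal.omega0 :=
              add_lt_add_right (Ordinal.nat_lt_omega0 _) _
          _ = Ordinal.omega0 * (((α : Ordinal) / Ordinal.omega0) + 1) := by
              rw [mul_add, mul_one]
          _ ≤ Ordinal.omega0 * ((β : Ordinal) / Ordinal.omega0) := by
              apply mul_le_mul_right
              rw [← Order.succ_le_iff] at hlt
              rwa [Ordinal.add_one_eq_succ]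
          _ ≤ (F β : Ordinal) := le_self_add
      · have hα := Ordinal.div_add_mod (α : Ordinal) Ordinal.omega0
        have hβ := Ordinal.div_add_mod (β : Ordinal) Ordinal.omega0
        rw [rnat_spec] at hα hβ
        have hrlt : rnat (α : Ordinal) < rnat (β : Ordinal) := by
          rw [← hα, ← hβ, heq, add_lt_add_iff_left] at h'
          exact_mod_cast h'
        show (F α : Ordinal) < (F β : Ordinal)
        simp only [hF, heq]
        apply add_lt_add_right
        exact_mod_cast (Nat.nth_lt_nth hpinf).2 hrlt
    have hrange : {α : Set.Iio γ | g (rnat α) = k} = Set.range F := by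
      ext α
      constructor
      · rintro (hmem : g (rnat (α : Ordinal)) = k)
        letI : DecidablePred p := Classical.decPred p
        have hmem' : p (rnat (α : Ordinal)) := hmem
        -- preimage: replace remainder by its count
        set m : ℕ := Nat.count p (rnat (α : Ordinal)) with hm
        have hxlt : Ordinal.omega0 * ((α : Ordinal) / Ordinal.omega0) + (m : Ordinal) < γ :=
          hadd _ (hqle α) _
        refine ⟨⟨_, hxlt⟩, ?_⟩
        have hnth : Nat.nth p m = rnat (α : Ordinal) := Nat.nth_count hmem'
        apply Subtype.ext
        show Ordinal.omega0 * (_ / Ordinal.omega0) + (Nat.nth p (rnat _) : Ordinal) = (α : Ordinal)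
        rw [div_mul_add, rnat_mul_add, hnth]
        conv_rhs => rw [← Ordinal.div_add_mod (α : Ordinal) Ordinal.omega0, rnat_spec]
      · rintro ⟨β, rfl⟩
        show g (rnat _) = k
        rw [rnat_mul_add]
        exact Nat.nth_mem_of_infinite hpinf _
    show Nonempty (↥{α : Set.Iio γ | g (rnat ↑α) = k} ≃o ↥(Set.Iio γ))
    rw [hrange]
    exact ⟨(hFmono.orderIso F).symm⟩
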